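/- arXiv:1803.06843 — 2 statements merged into one kernel-verified Lean document; each statement's English description precedes it below -/
import Mathlib

section
/- In the convex-hull representation of S_N(u) in terms of Q_0,…,Q_N, the coefficient identity holds: S_N(u) = D_N(u)^{-1} [ (ω_N/h_N) b_N(u) Q_N + Σ_{k=0}^{N-1} (ω_k/h_k) b_k(u) (1 − b_k(t) b_{k+1}(u)/(b_{k+1}(t) b_k(u))) Q_k ], where D_N(u) = Σ_{k=0}^N ω_k b_k(u). -/
open Finset

private lemma abel_aux {M : Type*} [AddCommGroup M] [Module ℝ M]
    (r a : ℕ → ℝ) (W : ℕ → M) (N : ℕ) :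
    ∑ k ∈ range (N + 1), (r k * a k) • W k =
      r N • (∑ j ∈ range (N + 1), a j • W j) +
        ∑ k ∈ range N, (r k - r (k + 1)) • (∑ j ∈ range (k + 1), a j • W j) := by
  induction N with
  | zero => simp [smul_smul]
  | succ n ih =>
      simp only [sum_range_succ, smul_add, sub_smul, smul_smul, sub_mul, ih]
      abel

theorem stmt8 (N d : ℕ) {α : Type*} (ω : ℕ → ℝ) (b : ℕ → α → ℝ) (t u : α)
    (W : ℕ → Fin d → ℝ)
    (hω : ∀ j ≤ N, 0 < ω j)
    (hbt : ∀ j ≤ N, 0 < b j t) (hbu : ∀ j ≤ N, 0 < b j u)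
    (h : ℕ → ℝ) (Q : ℕ → Fin d → ℝ)
    (hh : ∀ k ≤ N, h k = ω k * b k t / ∑ j ∈ range (k + 1), ω j * b j t)
    (hQ : ∀ k ≤ N, Q k = (∑ j ∈ range (k + 1), ω j * b j t)⁻¹ •
        ∑ j ∈ range (k + 1), (ω j * b j t) • W j) :
    (∑ k ∈ range (N + 1), ω k * b k u)⁻¹ •
        ∑ k ∈ range (N + 1), (ω k * b k u) • W k =
      (∑ k ∈ range (N + 1), ω k * b k u)⁻¹ •
        ((ω N / h N * b N u) • Q N +
          ∑ k ∈ range N, (ω k / h k * b k u *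
            (1 - b k t * b (k + 1) u / (b (k + 1) t * b k u))) • Q k) := by
  set A : ℕ → ℝ := fun k => ∑ j ∈ range (k + 1), ω j * b j t with hA
  set T : ℕ → Fin d → ℝ := fun k => ∑ j ∈ range (k + 1), (ω j * b j t) • W j with hT
  have hApos : ∀ k ≤ N, 0 < A k := by
    intro k hk
    apply Finset.sum_pos
    · intro j hj
      have hjN : j ≤ N := le_trans (Nat.lt_succ_iff.mp (mem_range.mp hj)) hk
      exact mul_pos (hω j hjN) (hbt j hjN)
    · exact ⟨0, mem_range.mpr (Nat.succ_pos k)⟩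
  congr 1
  -- LHS sum via Abel summation
  have key : ∑ k ∈ range (N + 1), (ω k * b k u) • W k =
      (b N u / b N t) • T N +
        ∑ k ∈ range N, (b k u / b k t - b (k + 1) u / b (k + 1) t) • T k := by
    have h1 : ∑ k ∈ range (N + 1), (ω k * b k u) • W k =
        ∑ k ∈ range (N + 1), ((b k u / b k t) * (ω k * b k t)) • W k := by
      apply sum_congr rfl
      intro k hk
      have hkN : k ≤ N := Nat.lt_succ_iff.mp (mem_range.mp hk)
      have hbt' : b k t ≠ 0 := (hbt k hkN).ne'
      congr 1
      field_simp
    rw [h1, abel_aux (fun k => b k u / b k t) (fun k => ω k * b k t) W N]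
  rw [key]
  congr 1
  · -- the N term
    rw [hQ N le_rfl, hh N le_rfl, smul_smul]
    congr 1
    have h1 : ω N ≠ 0 := (hω N le_rfl).ne'
    have h2 : b N t ≠ 0 := (hbt N le_rfl).ne'
    have h3 : A N ≠ 0 := (hApos N le_rfl).ne'
    have h3' : ∑ j ∈ range (N + 1), ω j * b j t ≠ 0 := h3
    field_simp
  · apply sum_congr rfl
    intro k hk
    have hkN : k < N := mem_range.mp hk
    have hk1 : k + 1 ≤ N := hkN
    rw [hQ k hkN.le, hh k hkN.le, smul_smul]
    congr 1
    have h1 : ω k ≠ 0 := (hω k hkN.le).ne'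
    have h2 : b k t ≠ 0 := (hbt k hkN.le).ne'
    have h3 : A k ≠ 0 := (hApos k hkN.le).ne'
    have h3' : ∑ j ∈ range (k + 1), ω j * b j t ≠ 0 := h3
    have h4 : b (k + 1) t ≠ 0 := (hbt (k + 1) hk1).ne'
    have h5 : b k u ≠ 0 := (hbu k hkN.le).ne'
    field_simp
end

section
/- The de Casteljau algorithm and the new geometric algorithm agree: for t ∈ (0,1), iterating Q^{(r)}_i := (1−t) Q^{(r-1)}_i + t Q^{(r-1)}_{i+1} starting from Q^{(0)}_i := W_i yields Q^{(n)}_0 equal to the point Q_n computed by the recurrence h_0 = 1, h_k = h_{k-1} t(n−k+1)/(k(1−t)+h_{k-1} t(n−k+1)), Q_k = (1−h_k)Q_{k-1} + h_k W_k; both equal Σ_{k=0}^n W_k B^n_k(t). -/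
open Finset

/-- The Bernstein polynomial `B^n_k` evaluated at `t`. -/
def bern (n k : ℕ) (t : ℝ) : ℝ := (n.choose k : ℝ) * t ^ k * (1 - t) ^ (n - k)

lemma bern_top (r : ℕ) (t : ℝ) : bern r (r+1) t = 0 := by
  simp [bern, Nat.choose_eq_zero_of_lt]

lemma bern_succ (r k : ℕ) (t : ℝ) :
    bern (r+1) (k+1) t = (1-t) * bern r (k+1) t + t * bern r k t := by
  unfold bern
  rcases le_or_gt (k+1) r with hle | hlt
  · have h1 : r + 1 - (k+1) = (r - (k+1)) + 1 := by omega
    have h2 : r - k = (r - (k+1)) + 1 := by omega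
    rw [h1, h2, Nat.choose_succ_succ]
    push_cast
    ring
  · have hz : r.choose (k+1) = 0 := Nat.choose_eq_zero_of_lt hlt
    rcases eq_or_lt_of_le (Nat.lt_succ_iff.mp hlt) with he | hlt2
    · subst he
      simp [hz, Nat.choose_self, Nat.sub_self]
      ring
    · have hz2 : r.choose k = 0 := Nat.choose_eq_zero_of_lt hlt2
      have hz3 : (r+1).choose (k+1) = 0 := Nat.choose_eq_zero_of_lt (by omega)
      simp [hz, hz2, hz3]

lemma bern_sum (n : ℕ) (t : ℝ) : ∑ k ∈ range (n+1), bern n k t = 1 := by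
  have h1 : (t + (1-t))^n = ∑ k ∈ range (n+1), t^k * (1-t)^(n-k) * (n.choose k : ℝ) :=
    add_pow t (1-t) n
  simp only [add_sub_cancel, one_pow] at h1
  rw [h1]
  exact Finset.sum_congr rfl (fun k _ => by unfold bern; ring)

lemma bern_shift (n k : ℕ) (t : ℝ) (hk : k + 1 ≤ n) :
    bern n k t * t * ((n - k : ℕ) : ℝ) = bern n (k+1) t * ((k+1 : ℕ) : ℝ) * (1 - t) := by
  unfold bern
  have e2 : n - k = (n - (k+1)) + 1 := by omega
  have hc : (n.choose (k+1) : ℝ) * ((k+1 : ℕ):ℝ) = (n.choose k : ℝ) * ((n - k : ℕ):ℝ) := by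
    exact_mod_cast congrArg (Nat.cast (R := ℝ)) (Nat.choose_succ_right_eq n k)
  rw [e2, pow_succ]
  push_cast [e2] at hc ⊢
  linear_combination (-(t^(k+1)) * (1-t)^(n-(k+1)) * (1-t)) * hc -- x

lemma deCast (n d : ℕ) (t : ℝ) (W : ℕ → Fin d → ℝ) (C : ℕ → ℕ → Fin d → ℝ)
    (hC0 : ∀ i ≤ n, C 0 i = W i)
    (hCrec : ∀ r, 1 ≤ r → r ≤ n → ∀ i ≤ n - r,
      C r i = (1 - t) • C (r - 1) i + t • C (r - 1) (i + 1)) :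
    ∀ r ≤ n, ∀ i ≤ n - r, C r i = ∑ k ∈ range (r+1), bern r k t • W (i+k) := by
  intro r
  induction r with
  | zero =>
    intro _ i hi
    simp only [Nat.sub_zero] at hi
    simp [bern, hC0 i hi]
  | succ r ih =>
    intro hrn i hi
    have e1 := hCrec (r+1) (by omega) hrn i hi
    rw [Nat.add_sub_cancel] at e1
    rw [e1, ih (by omega) i (by omega), ih (by omega) (i+1) (by omega)]
    symm
    calc ∑ k ∈ range (r+1+1), bern (r+1) k t • W (i+k)
        = (∑ k ∈ range (r+1), bern (r+1) (k+1) t • W (i+(k+1))) + bern (r+1) 0 t • W (i+0) :=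
          Finset.sum_range_succ' _ (r+1)
      _ = (∑ k ∈ range (r+1), ((1-t) * bern r (k+1) t) • W (i+(k+1)))
          + (∑ k ∈ range (r+1), (t * bern r k t) • W (i+(k+1)))
          + ((1-t) * bern r 0 t) • W (i+0) := by
          rw [show bern (r+1) 0 t = (1-t) * bern r 0 t from by simp [bern]; ring]
          simp_rw [bern_succ, add_smul, Finset.sum_add_distrib]
      _ = (∑ k ∈ range (r+1+1), ((1-t) * bern r k t) • W (i+k))
          + (∑ k ∈ range (r+1), (t * bern r k t) • W (i+(k+1))) := by
          rw [Finset.sum_range_succ' (fun k => ((1-t) * bern r k t) • W (i+k)) (r+1)]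
          abel
      _ = ((1-t) • ∑ k ∈ range (r+1), bern r k t • W (i+k))
          + t • ∑ k ∈ range (r+1), bern r k t • W (i+1+k) := by
          rw [Finset.sum_range_succ (fun k => ((1-t) * bern r k t) • W (i+k)) (r+1), bern_top]
          simp only [mul_zero, zero_smul, add_zero]
          rw [Finset.smul_sum, Finset.smul_sum]
          congr 1
          · exact Finset.sum_congr rfl (fun k _ => (smul_smul _ _ _).symm)
          · refine Finset.sum_congr rfl (fun k _ => ?_)
            rw [smul_smul, show i + (k+1) = i + 1 + k from by omega]

lemma bern_pos (n k : ℕ) (t : ℝ) (ht : t ∈ Set.Ioo (0:ℝ) 1) (hk : k ≤ n) : 0 < bern n k t := by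
  obtain ⟨ht0, ht1⟩ := ht
  exact mul_pos (mul_pos (by exact_mod_cast Nat.choose_pos hk) (pow_pos ht0 _))
    (pow_pos (by linarith) _)

lemma ssum_pos (n m : ℕ) (t : ℝ) (ht : t ∈ Set.Ioo (0:ℝ) 1) (hm : m ≤ n) :
    0 < ∑ k ∈ range (m+1), bern n k t :=
  Finset.sum_pos (fun k hk => bern_pos n k t ht (by have := Finset.mem_range.mp hk; omega))
    ⟨0, Finset.mem_range.mpr (by omega)⟩

lemma hForm (n : ℕ) (t : ℝ) (ht : t ∈ Set.Ioo (0:ℝ) 1) (h : ℕ → ℝ) (hh0 : h 0 = 1)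
    (hh : ∀ k, 1 ≤ k → k ≤ n →
      h k = h (k - 1) * t * ((n - k + 1 : ℕ) : ℝ) /
        ((k : ℝ) * (1 - t) + h (k - 1) * t * ((n - k + 1 : ℕ) : ℝ))) :
    ∀ m ≤ n, h m = bern n m t / ∑ k ∈ range (m+1), bern n k t := by
  intro m
  induction m with
  | zero =>
    intro _
    rw [hh0, Finset.sum_range_one, div_self (ne_of_gt (bern_pos n 0 t ht (by omega)))]
  | succ m ih =>
    intro hmn
    have hIH := ih (by omega)
    have e0 := hh (m+1) (by omega) hmn
    rw [Nat.add_sub_cancel, show n - (m+1) + 1 = n - m from by omega] at e0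
    rw [e0]
    set b := bern n (m+1) t with hb
    set bm := bern n m t with hbm
    set s := ∑ k ∈ range (m+1), bern n k t with hs
    have hssucc : ∑ k ∈ range (m+1+1), bern n k t = s + b := Finset.sum_range_succ _ _
    rw [hIH, hssucc]
    have hspos : 0 < s := ssum_pos n m t ht (by omega)
    have hbpos : 0 < b := bern_pos n (m+1) t ht hmn
    have hbmpos : 0 < bm := bern_pos n m t ht (by omega)
    have key : bm * t * ((n - m : ℕ) : ℝ) = b * ((m+1 : ℕ) : ℝ) * (1 - t) :=
      bern_shift n m t hmn
    obtain ⟨ht0, ht1⟩ := ht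
    have hc : (0:ℝ) < ((n - m : ℕ) : ℝ) := by
      have h1 : 1 ≤ n - m := by omega
      exact_mod_cast Nat.lt_of_lt_of_le Nat.zero_lt_one h1
    have h1 : bm / s * t * ((n - m : ℕ) : ℝ) = b * ((m+1 : ℕ) : ℝ) * (1 - t) / s := by
      rw [div_mul_eq_mul_div, div_mul_eq_mul_div, key]
    rw [h1]
    have hden : (0:ℝ) < ((m+1 : ℕ) : ℝ) * (1 - t) + b * ((m+1 : ℕ) : ℝ) * (1 - t) / s := by
      have h2 : (0:ℝ) < ((m+1 : ℕ) : ℝ) * (1 - t) := by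
        apply mul_pos
        · exact_mod_cast Nat.succ_pos m
        · linarith
      have h3 : (0:ℝ) < b * ((m+1 : ℕ) : ℝ) * (1 - t) / s := by
        apply div_pos _ hspos
        apply mul_pos _ (by linarith : (0:ℝ) < 1 - t)
        apply mul_pos hbpos
        exact_mod_cast Nat.succ_pos m
      linarith
    have hsb : s + b ≠ 0 := ne_of_gt (by linarith)
    rw [div_div, div_eq_div_iff (ne_of_gt (mul_pos hspos hden)) hsb]
    field_simp

lemma QForm (n d : ℕ) (t : ℝ) (ht : t ∈ Set.Ioo (0:ℝ) 1) (W : ℕ → Fin d → ℝ)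
    (h : ℕ → ℝ) (Q : ℕ → Fin d → ℝ) (hh0 : h 0 = 1) (hQ0 : Q 0 = W 0)
    (hh : ∀ k, 1 ≤ k → k ≤ n →
      h k = h (k - 1) * t * ((n - k + 1 : ℕ) : ℝ) /
        ((k : ℝ) * (1 - t) + h (k - 1) * t * ((n - k + 1 : ℕ) : ℝ)))
    (hQ : ∀ k, 1 ≤ k → k ≤ n → Q k = (1 - h k) • Q (k - 1) + h k • W k) :
    ∀ m ≤ n, Q m = (∑ k ∈ range (m+1), bern n k t)⁻¹ •
      ∑ k ∈ range (m+1), bern n k t • W k := by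
  intro m
  induction m with
  | zero =>
    intro _
    rw [hQ0, Finset.sum_range_one, Finset.sum_range_one, smul_smul,
      inv_mul_cancel₀ (ne_of_gt (bern_pos n 0 t ht (by omega))), one_smul]
  | succ m ih =>
    intro hmn
    have hIH := ih (by omega)
    have e0 := hQ (m+1) (by omega) hmn
    rw [Nat.add_sub_cancel] at e0
    have hform := hForm n t ht h hh0 hh (m+1) hmn
    rw [e0, hIH, hform]
    set b := bern n (m+1) t with hb
    set s := ∑ k ∈ range (m+1), bern n k t with hs
    have hssucc : ∑ k ∈ range (m+1+1), bern n k t = s + b := Finset.sum_range_succ _ _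
    have hTsucc : ∑ k ∈ range (m+1+1), bern n k t • W k
        = (∑ k ∈ range (m+1), bern n k t • W k) + b • W (m+1) := Finset.sum_range_succ _ _
    rw [hssucc, hTsucc]
    have hspos : 0 < s := ssum_pos n m t ht (by omega)
    have hbpos : 0 < b := bern_pos n (m+1) t ht hmn
    have hsb : s + b ≠ 0 := ne_of_gt (by linarith)
    funext j
    simp only [Pi.add_apply, Pi.smul_apply, smul_eq_mul, Finset.sum_apply]
    field_simp
    ring

theorem stmt18 (n d : ℕ) (t : ℝ) (ht : t ∈ Set.Ioo (0 : ℝ) 1)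
    (W : ℕ → Fin d → ℝ)
    (C : ℕ → ℕ → Fin d → ℝ)
    (hC0 : ∀ i ≤ n, C 0 i = W i)
    (hCrec : ∀ r, 1 ≤ r → r ≤ n → ∀ i ≤ n - r,
      C r i = (1 - t) • C (r - 1) i + t • C (r - 1) (i + 1))
    (h : ℕ → ℝ) (Q : ℕ → Fin d → ℝ)
    (hh0 : h 0 = 1) (hQ0 : Q 0 = W 0)
    (hh : ∀ k, 1 ≤ k → k ≤ n →
      h k = h (k - 1) * t * ((n - k + 1 : ℕ) : ℝ) /
        ((k : ℝ) * (1 - t) + h (k - 1) * t * ((n - k + 1 : ℕ) : ℝ)))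
    (hQ : ∀ k, 1 ≤ k → k ≤ n → Q k = (1 - h k) • Q (k - 1) + h k • W k) :
    C n 0 = Q n ∧ Q n = ∑ k ∈ range (n + 1), bern n k t • W k := by
  obtain ⟨-, -⟩ := id ht
  have hCn := deCast n d t W C hC0 hCrec n le_rfl 0 (by omega)
  simp only [zero_add] at hCn
  have hQn := QForm n d t ht W h Q hh0 hQ0 hh hQ n le_rfl
  rw [bern_sum, inv_one, one_smul] at hQn
  exact ⟨hCn.trans hQn.symm, hQn⟩
end
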